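/- For any real numbers a, b, α: if frac(a+α)+frac(b) ∈ [1/2, 3/2) and frac(a)+frac(b+α) ∈ [1/2, 3/2), then φ(a+α, b) − φ(a, b) = φ(a, b) − φ(a, b+α), where φ(x,y) := frac(x) − frac(y). -/
import Mathlib

theorem phi_three_term_ap (a b α : ℝ)
    (h1 : Int.fract (a + α) + Int.fract b ∈ Set.Ico (1/2 : ℝ) (3/2))
    (h2 : Int.fract a + Int.fract (b + α) ∈ Set.Ico (1/2 : ℝ) (3/2)) :
    (Int.fract (a + α) - Int.fract b) - (Int.fract a - Int.fract b)
      = (Int.fract a - Int.fract b) - (Int.fract a - Int.fract (b + α)) := by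
  obtain ⟨h1l, h1r⟩ := h1
  obtain ⟨h2l, h2r⟩ := h2
  obtain ⟨m, hm⟩ := Int.fract_add a α
  obtain ⟨n, hn⟩ := Int.fract_add b α
  have hmn : (m : ℝ) = n := by
    have hlt : |(m : ℝ) - n| < 1 := by
      rw [abs_sub_lt_iff]; constructor <;> nlinarith
    have h1 : ((m - n : ℤ) : ℝ) < 1 := by push_cast; linarith [abs_lt.mp hlt]
    have h2 : (-1 : ℝ) < ((m - n : ℤ) : ℝ) := by push_cast; linarith [abs_lt.mp hlt]
    have : m - n = 0 := by
      have a1 : (m - n : ℤ) < 1 := by exact_mod_cast h1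
      have a2 : (-1 : ℤ) < m - n := by exact_mod_cast h2
      omega
    have : m = n := by omega
    exact_mod_cast this
  linarith
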